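/- Let (μ_n) be a sequence in 𝓜 converging weakly to μ ∈ 𝓜 with lim_{n→∞} ∫ log η dμ_n = ∫ log η dμ > −∞, and let q ≥ 1. Then there exists a function δ : (0,1) → [0,∞) with δ(ε) → 0 as ε → 0 such that for all i,j ∈ {0,…,q−1} and every ε ∈ (0,1): (a) for all sufficiently large n, 0 ≥ ∫_{{η∘f^i ≤ ε}} log(η∘f^j) dμ_n ≥ −δ(ε); and (b) 0 ≥ ∫_{{η∘f^i ≤ ε}} log(η∘f^j) dμ ≥ −δ(ε). -/

import Mathlib

open MeasureTheory Filter Metric Set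
open scoped ENNReal NNReal Topology

noncomputable section

variable {X : Type*} [MetricSpace X] [CompactSpace X] [MeasurableSpace X] [BorelSpace X]

/-- `Ω = X \ ⋃_{i ≥ 0} f^{-i}(I)`: the set of points whose whole forward orbit avoids `I`. -/
def dynOmega (f : X → X) (I : Set X) : Set X := {x | ∀ n : ℕ, f^[n] x ∉ I}

/-- `μ ∈ 𝓜`: a Borel probability measure with `μ(I) = 0` which is invariant, `f_* μ = μ`. -/
def MemM (f : X → X) (I : Set X) (μ : Measure X) : Prop :=
  IsProbabilityMeasure μ ∧ μ I = 0 ∧ Measure.map f μ = μ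

private lemma aux_sqrt_atTop : Tendsto Real.sqrt atTop atTop := by
  apply tendsto_atTop_atTop.mpr
  intro b
  refine ⟨(max b 0) ^ 2, fun a ha => le_trans (le_max_left b 0) ?_⟩
  rw [← Real.sqrt_sq (le_max_right b 0)]
  exact Real.sqrt_le_sqrt ha

private lemma aux_map_iter {f : X → X} (hf : Measurable f) {ν : Measure X}
    (hinv : Measure.map f ν = ν) : ∀ k : ℕ, Measure.map f^[k] ν = ν := by
  intro k
  induction k with
  | zero => simp
  | succ k ih =>
    rw [Function.iterate_succ, ← Measure.map_map (hf.iterate k) hf, hinv, ih]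

private lemma aux_core {f : X → X} (hf : Measurable f)
    {η : X → ℝ} (hηm : Measurable η) (hη01 : ∀ x, η x ∈ Icc (0:ℝ) 1)
    {ν : Measure X} [IsProbabilityMeasure ν]
    (hinv : Measure.map f ν = ν) (hν0 : ν {x | η x = 0} = 0)
    (hint : Integrable (fun x => Real.log (η x)) ν)
    (i j : ℕ) {ε t : ℝ} (hε : ε ∈ Ioo (0:ℝ) 1) (ht : t ∈ Ioo (0:ℝ) 1) :
    ((∫ x, Real.log (η x) ∂ν) - ∫ x, Real.log (max (η x) t) ∂ν)
      + Real.log t * ((∫ x, -Real.log (η x) ∂ν) / (-Real.log ε))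
      ≤ ∫ x in {x | η (f^[i] x) ≤ ε}, Real.log (η (f^[j] x)) ∂ν := by
  have hlogt : Real.log t < 0 := Real.log_neg ht.1 ht.2
  have hlogε : 0 < -Real.log ε := by
    have := Real.log_neg hε.1 hε.2; linarith
  set g : X → ℝ := fun x => Real.log (max (η x) t) with hg
  have hgm : Measurable g := Real.measurable_log.comp (hηm.max measurable_const)
  have hg_lb : ∀ x, Real.log t ≤ g x := fun x =>
    Real.log_le_log ht.1 (le_max_right _ _)
  have hg_ub : ∀ x, g x ≤ 0 := fun x =>
    Real.log_nonpos (le_trans ht.1.le (le_max_right _ _))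
      (max_le (hη01 x).2 ht.2.le)
  have hg_int : Integrable g ν := by
    refine Integrable.mono' (integrable_const (-Real.log t)) hgm.aestronglyMeasurable ?_
    filter_upwards with x
    rw [Real.norm_eq_abs, abs_le]
    exact ⟨by linarith [hg_lb x, hg_ub x], by linarith [hg_ub x, hlogt]⟩
  -- measurable sets
  have hA : MeasurableSet {x | η (f^[i] x) ≤ ε} :=
    measurableSet_le (hηm.comp (hf.iterate i)) measurable_const
  set A := {x | η (f^[i] x) ≤ ε} with hAdef
  -- invariance of iterates
  have hmap : ∀ k : ℕ, Measure.map f^[k] ν = ν := aux_map_iter hf hinv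
  -- integrability of compositions
  have hcomp_int : ∀ (φ : X → ℝ), Measurable φ → Integrable φ ν →
      Integrable (fun x => φ (f^[j] x)) ν := by
    intro φ hφm hφi
    have : Integrable φ (Measure.map f^[j] ν) := by rw [hmap j]; exact hφi
    exact (integrable_map_measure hφm.aestronglyMeasurable
      (hf.iterate j).aemeasurable).mp this
  have hcomp_eq : ∀ (φ : X → ℝ), Measurable φ →
      (∫ x, φ (f^[j] x) ∂ν) = ∫ x, φ x ∂ν := by
    intro φ hφm
    conv_rhs => rw [← hmap j]
    rw [integral_map (hf.iterate j).aemeasurable hφm.aestronglyMeasurable]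
  have hlog_int : Integrable (fun x => Real.log (η (f^[j] x))) ν :=
    hcomp_int _ (Real.measurable_log.comp hηm) hint
  have hG_int : Integrable (fun x => Real.log (η (f^[j] x)) - g (f^[j] x)) ν :=
    hlog_int.sub (hcomp_int _ hgm hg_int)
  -- a.e. positivity of η ∘ f^[j]
  have hm0 : MeasurableSet {x : X | η x = 0} := measurableSet_eq_fun hηm measurable_const
  have haej : ∀ᵐ x ∂ν, η (f^[j] x) ≠ 0 := by
    have h0 : ν {x | η (f^[j] x) = 0} = 0 := by
      rw [show {x | η (f^[j] x) = 0} = f^[j] ⁻¹' {x | η x = 0} from rfl,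
        ← Measure.map_apply (hf.iterate j) hm0, hmap j]
      exact hν0
    exact (ae_iff).mpr (by simpa using h0)
  -- Step 1: pointwise lower bound on A
  have step1 : (∫ x in A, (Real.log (η (f^[j] x)) - g (f^[j] x)) + Real.log t ∂ν)
      ≤ ∫ x in A, Real.log (η (f^[j] x)) ∂ν := by
    refine setIntegral_mono_on ((hG_int.add (integrable_const _)).integrableOn) 
      hlog_int.integrableOn hA ?_
    intro x _
    by_cases h0 : η (f^[j] x) = 0
    · simp [hg, h0, max_eq_right ht.1.le]
    · have hpos : 0 < η (f^[j] x) := lt_of_le_of_ne (hη01 _).1 (Ne.symm h0)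
      have : Real.log (η (f^[j] x)) ≤ g (f^[j] x) :=
        Real.log_le_log hpos (le_max_left _ _)
      linarith [hg_lb (f^[j] x)]
  -- Step 1': split the integral
  have step1' : (∫ x in A, (Real.log (η (f^[j] x)) - g (f^[j] x)) + Real.log t ∂ν)
      = (∫ x in A, Real.log (η (f^[j] x)) - g (f^[j] x) ∂ν) + Real.log t * (ν A).toReal := by
    rw [integral_add hG_int.integrableOn (integrable_const _), setIntegral_const,
      smul_eq_mul, mul_comm]
    rfl
  -- Step 2: extend the nonpositive part to all of X
  have step2 : (∫ x, Real.log (η (f^[j] x)) - g (f^[j] x) ∂ν)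
      ≤ ∫ x in A, Real.log (η (f^[j] x)) - g (f^[j] x) ∂ν := by
    have hneg : 0 ≤ᵐ[ν] fun x => -(Real.log (η (f^[j] x)) - g (f^[j] x)) := by
      filter_upwards [haej] with x hx
      simp only [Pi.zero_apply]
      have hpos : 0 < η (f^[j] x) := lt_of_le_of_ne (hη01 _).1 (Ne.symm hx)
      have : Real.log (η (f^[j] x)) ≤ g (f^[j] x) :=
        Real.log_le_log hpos (le_max_left _ _)
      linarith
    have h := setIntegral_le_integral (s := A) hG_int.neg hneg
    simp only [Pi.neg_apply, integral_neg] at h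
    linarith
  -- Step 3: compute the full-space integral
  have step3 : (∫ x, Real.log (η (f^[j] x)) - g (f^[j] x) ∂ν)
      = (∫ x, Real.log (η x) ∂ν) - ∫ x, g x ∂ν := by
    have e1 : (∫ x, Real.log (η (f^[j] x)) ∂ν) = ∫ x, Real.log (η x) ∂ν :=
      hcomp_eq (fun x => Real.log (η x)) (Real.measurable_log.comp hηm)
    have e2 : (∫ x, g (f^[j] x) ∂ν) = ∫ x, g x ∂ν := hcomp_eq g hgm
    rw [integral_sub hlog_int (hcomp_int _ hgm hg_int), e1, e2]
  -- Step 4: Chebyshev bound on ν A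
  have hC0 : 0 ≤ ∫ x, -Real.log (η x) ∂ν :=
    integral_nonneg fun x => neg_nonneg.mpr (Real.log_nonpos (hη01 x).1 (hη01 x).2)
  have cheb : (ν A).toReal ≤ (∫ x, -Real.log (η x) ∂ν) / (-Real.log ε) := by
    have hAeq : ν A = ν {x | η x ≤ ε} := by
      have : A = f^[i] ⁻¹' {x | η x ≤ ε} := rfl
      rw [this, ← Measure.map_apply (hf.iterate i)
        (measurableSet_le hηm measurable_const), hmap i]
    set B := {x | η x ≤ ε} ∩ {x | η x ≠ 0} with hB
    have hBm : MeasurableSet B :=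
      (measurableSet_le hηm measurable_const).inter hm0.compl
    have hνB : ν {x | η x ≤ ε} ≤ ν B := by
      have hsub : {x | η x ≤ ε} ⊆ B ∪ {x | η x = 0} := by
        intro x hx
        by_cases h : η x = 0
        · exact Or.inr h
        · exact Or.inl ⟨hx, h⟩
      calc ν {x | η x ≤ ε} ≤ ν (B ∪ {x | η x = 0}) := measure_mono hsub
        _ ≤ ν B + ν {x | η x = 0} := measure_union_le _ _
        _ = ν B := by rw [hν0, add_zero]
    have key : (-Real.log ε) * (ν B).toReal ≤ ∫ x, -Real.log (η x) ∂ν := by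
      have h1 : (-Real.log ε) * (ν B).toReal ≤ ∫ x in B, -Real.log (η x) ∂ν := by
        refine le_trans (le_of_eq (by rw [smul_eq_mul, mul_comm]; rfl))
          (setIntegral_ge_of_const_le (c := -Real.log ε) hBm (measure_ne_top _ _) ?_
          hint.neg.integrableOn)
        intro x hx
        have hpos : 0 < η x := lt_of_le_of_ne (hη01 x).1 (Ne.symm hx.2)
        have := Real.log_le_log hpos hx.1
        linarith
      have h2 : (∫ x in B, -Real.log (η x) ∂ν) ≤ ∫ x, -Real.log (η x) ∂ν := by
        refine setIntegral_le_integral hint.neg ?_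
        filter_upwards with x
        simp only [Pi.zero_apply]
        have := Real.log_nonpos (hη01 x).1 (hη01 x).2; linarith
      linarith
    rw [le_div_iff₀ hlogε]
    calc (ν A).toReal * (-Real.log ε) = (-Real.log ε) * (ν A).toReal := mul_comm _ _
      _ ≤ (-Real.log ε) * (ν B).toReal := by
          refine mul_le_mul_of_nonneg_left ?_ hlogε.le
          exact ENNReal.toReal_mono (measure_ne_top _ _) (hAeq ▸ hνB)
      _ ≤ ∫ x, -Real.log (η x) ∂ν := key
  -- Step 5: combine
  have step5 : Real.log t * ((∫ x, -Real.log (η x) ∂ν) / (-Real.log ε))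
      ≤ Real.log t * (ν A).toReal :=
    mul_le_mul_of_nonpos_left cheb hlogt.le
  linarith

private lemma aux_tendsto_g {η : X → ℝ} (hηm : Measurable η) (hη01 : ∀ x, η x ∈ Icc (0:ℝ) 1)
    {μ : Measure X} [IsProbabilityMeasure μ] (hzeroμ : μ {x | η x = 0} = 0)
    (hintμ : Integrable (fun x => Real.log (η x)) μ) :
    Tendsto (fun t => ∫ x, Real.log (max (η x) t) ∂μ) (𝓝[>] (0:ℝ))
      (𝓝 (∫ x, Real.log (η x) ∂μ)) := by
  have hae : ∀ᵐ x ∂μ, η x ≠ 0 := (ae_iff).mpr (by simpa using hzeroμ)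
  apply tendsto_integral_filter_of_dominated_convergence (fun x => -Real.log (η x))
  · filter_upwards with u
    exact (Real.measurable_log.comp (hηm.max measurable_const)).aestronglyMeasurable
  · filter_upwards [Ioo_mem_nhdsGT one_pos] with u hu
    filter_upwards [hae] with x hx
    have hpos : 0 < η x := lt_of_le_of_ne (hη01 x).1 (Ne.symm hx)
    have h1 : Real.log (η x) ≤ Real.log (max (η x) u) :=
      Real.log_le_log hpos (le_max_left _ _)
    have h2 : Real.log (max (η x) u) ≤ 0 :=
      Real.log_nonpos (le_trans hu.1.le (le_max_right _ _)) (max_le (hη01 x).2 hu.2.le)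
    rw [Real.norm_eq_abs, abs_le]
    constructor <;> [linarith [Real.log_nonpos (hη01 x).1 (hη01 x).2]; linarith]
  · exact hintμ.neg
  · filter_upwards [hae] with x hx
    have hpos : 0 < η x := lt_of_le_of_ne (hη01 x).1 (Ne.symm hx)
    refine Tendsto.congr' ?_ tendsto_const_nhds
    filter_upwards [Ioo_mem_nhdsGT hpos] with u hu
    rw [max_eq_left hu.2.le]

/-- **Lemma (estimation of integrals).** Let `(μ_n)` be a sequence of `𝓜` converging weakly
to `μ ∈ 𝓜`, with `lim_n ∫ log η dμ_n = ∫ log η dμ > -∞` (the condition `> -∞` is encoded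
as integrability of `log ∘ η` together with `ν{η = 0} = 0`), and let `q ≥ 1`. Then there is
a function `δ(ε) ≥ 0`, tending to `0` as `ε → 0⁺`, such that for all `i, j ∈ {0, …, q-1}`
and all `ε ∈ (0,1)`:
(a) for all sufficiently large `n`, `0 ≥ ∫_{η∘f^i ≤ ε} log (η ∘ f^j) dμ_n ≥ -δ(ε)`, and
(b) `0 ≥ ∫_{η∘f^i ≤ ε} log (η ∘ f^j) dμ ≥ -δ(ε)`. -/
theorem integral_estimate_near_indeterminacy
    (f : X → X) (I : Set X) (hI : IsClosed I)
    (hf : Measurable f) (hfc : ContinuousOn f Iᶜ)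
    (η : X → ℝ) (hηc : Continuous η) (hη01 : ∀ x, η x ∈ Icc (0 : ℝ) 1)
    (hηI : ∀ x ∈ I, η x = 0)
    (μseq : ℕ → Measure X) (μ : Measure X)
    (hμseq : ∀ n, MemM f I (μseq n)) (hμ : MemM f I μ)
    (hweak : ∀ g : C(X, ℝ),
      Tendsto (fun n => ∫ x, g x ∂(μseq n)) atTop (𝓝 (∫ x, g x ∂μ)))
    (hint : ∀ n, Integrable (fun x => Real.log (η x)) (μseq n))
    (hzero : ∀ n, (μseq n) {x | η x = 0} = 0)
    (hintμ : Integrable (fun x => Real.log (η x)) μ)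
    (hzeroμ : μ {x | η x = 0} = 0)
    (hlim : Tendsto (fun n => ∫ x, Real.log (η x) ∂(μseq n)) atTop
      (𝓝 (∫ x, Real.log (η x) ∂μ)))
    (q : ℕ) (hq : 1 ≤ q) :
    ∃ δ : ℝ → ℝ, (∀ ε, 0 ≤ δ ε) ∧ Tendsto δ (𝓝[>] (0 : ℝ)) (𝓝 0) ∧
      ∀ i < q, ∀ j < q, ∀ ε ∈ Ioo (0 : ℝ) 1,
        (∀ᶠ n in atTop,
          (∫ x in {x | η (f^[i] x) ≤ ε}, Real.log (η (f^[j] x)) ∂(μseq n)) ≤ 0 ∧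
          -δ ε ≤ ∫ x in {x | η (f^[i] x) ≤ ε}, Real.log (η (f^[j] x)) ∂(μseq n)) ∧
        ((∫ x in {x | η (f^[i] x) ≤ ε}, Real.log (η (f^[j] x)) ∂μ) ≤ 0 ∧
          -δ ε ≤ ∫ x in {x | η (f^[i] x) ≤ ε}, Real.log (η (f^[j] x)) ∂μ) := by
  classical
  haveI hprob : IsProbabilityMeasure μ := hμ.1
  have hηm : Measurable η := hηc.measurable
  set L : ℝ := ∫ x, Real.log (η x) ∂μ with hLdef
  have hL0 : L ≤ 0 := integral_nonpos fun x => Real.log_nonpos (hη01 x).1 (hη01 x).2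
  set s : ℝ → ℝ := fun ε => Real.sqrt (-Real.log ε) with hsdef
  set t : ℝ → ℝ := fun ε => Real.exp (-(s ε)) with htdef
  -- basic facts about s and t on (0,1)
  have hlogε : ∀ ε : ℝ, ε ∈ Ioo (0:ℝ) 1 → 0 < -Real.log ε := fun ε hε => by
    have := Real.log_neg hε.1 hε.2; linarith
  have hspos : ∀ ε : ℝ, ε ∈ Ioo (0:ℝ) 1 → 0 < s ε := fun ε hε =>
    Real.sqrt_pos.mpr (hlogε ε hε)
  have hssq : ∀ ε : ℝ, ε ∈ Ioo (0:ℝ) 1 → s ε * s ε = -Real.log ε := fun ε hε =>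
    Real.mul_self_sqrt (hlogε ε hε).le
  have htmem : ∀ ε : ℝ, ε ∈ Ioo (0:ℝ) 1 → t ε ∈ Ioo (0:ℝ) 1 := fun ε hε =>
    ⟨Real.exp_pos _, Real.exp_lt_one_iff.mpr (by linarith [hspos ε hε])⟩
  have hlogt : ∀ ε : ℝ, Real.log (t ε) = -(s ε) := fun ε => Real.log_exp _
  -- the function δ
  set δ0 : ℝ → ℝ := fun ε =>
    ((∫ x, Real.log (max (η x) (t ε)) ∂μ) - L) + ε + (1 - L) / s ε with hδ0def
  -- integral of g over μ dominates L
  have hgL : ∀ ε : ℝ, ε ∈ Ioo (0:ℝ) 1 → L ≤ ∫ x, Real.log (max (η x) (t ε)) ∂μ := by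
    intro ε hε
    have hae : ∀ᵐ x ∂μ, η x ≠ 0 := (ae_iff).mpr (by simpa using hzeroμ)
    have hgm : Measurable fun x => Real.log (max (η x) (t ε)) :=
      Real.measurable_log.comp (hηm.max measurable_const)
    have hg_int : Integrable (fun x => Real.log (max (η x) (t ε))) μ := by
      refine Integrable.mono' (integrable_const (-Real.log (t ε)))
        hgm.aestronglyMeasurable ?_
      filter_upwards with x
      have hlt : Real.log (t ε) < 0 := Real.log_neg (htmem ε hε).1 (htmem ε hε).2
      have h1 : Real.log (t ε) ≤ Real.log (max (η x) (t ε)) :=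
        Real.log_le_log (htmem ε hε).1 (le_max_right _ _)
      have h2 : Real.log (max (η x) (t ε)) ≤ 0 :=
        Real.log_nonpos (le_trans (htmem ε hε).1.le (le_max_right _ _))
          (max_le (hη01 x).2 (htmem ε hε).2.le)
      rw [Real.norm_eq_abs, abs_le]; constructor <;> linarith
    refine integral_mono_ae hintμ hg_int ?_
    filter_upwards [hae] with x hx
    have hpos : 0 < η x := lt_of_le_of_ne (hη01 x).1 (Ne.symm hx)
    exact Real.log_le_log hpos (le_max_left _ _)
  refine ⟨fun ε => if ε ∈ Ioo (0:ℝ) 1 then δ0 ε else 0, ?_, ?_, ?_⟩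
  · -- nonnegativity
    intro ε
    show (0:ℝ) ≤ if ε ∈ Ioo (0:ℝ) 1 then δ0 ε else 0
    by_cases hε : ε ∈ Ioo (0:ℝ) 1
    · rw [if_pos hε]
      have h1 := hgL ε hε
      have h2 : 0 ≤ (1 - L) / s ε := div_nonneg (by linarith) (hspos ε hε).le
      simp only [hδ0def]
      linarith [hε.1]
    · rw [if_neg hε]
  · -- tendsto 0
    have hmem : Ioo (0:ℝ) 1 ∈ 𝓝[>] (0:ℝ) := Ioo_mem_nhdsGT one_pos
    have heq : (fun ε => if ε ∈ Ioo (0:ℝ) 1 then δ0 ε else 0) =ᶠ[𝓝[>] (0:ℝ)] δ0 := by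
      filter_upwards [hmem] with ε hε
      rw [if_pos hε]
    rw [tendsto_congr' heq]
    -- s → atTop
    have hsT : Tendsto s (𝓝[>] (0:ℝ)) atTop := by
      apply aux_sqrt_atTop.comp
      exact (tendsto_neg_atBot_atTop).comp Real.tendsto_log_nhdsGT_zero
    -- t → 0+
    have htT : Tendsto t (𝓝[>] (0:ℝ)) (𝓝[>] (0:ℝ)) := by
      rw [tendsto_nhdsWithin_iff]
      constructor
      · exact Real.tendsto_exp_atBot.comp (tendsto_neg_atTop_atBot.comp hsT)
      · filter_upwards with ε; exact Real.exp_pos _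
    have h1 : Tendsto (fun ε => (∫ x, Real.log (max (η x) (t ε)) ∂μ) - L)
        (𝓝[>] (0:ℝ)) (𝓝 0) := by
      have := (aux_tendsto_g hηm hη01 hzeroμ hintμ).comp htT
      have h := this.sub_const L
      simpa [← hLdef] using h
    have h2 : Tendsto (fun ε : ℝ => ε) (𝓝[>] (0:ℝ)) (𝓝 0) :=
      tendsto_id.mono_left nhdsWithin_le_nhds
    have h3 : Tendsto (fun ε => (1 - L) / s ε) (𝓝[>] (0:ℝ)) (𝓝 0) :=
      tendsto_const_nhds.div_atTop hsT
    have := (h1.add h2).add h3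
    simpa using this
  · -- main estimates
    intro i _ j _ ε hε
    have hA : MeasurableSet {x | η (f^[i] x) ≤ ε} :=
      measurableSet_le (hηm.comp (hf.iterate i)) measurable_const
    have hδval : (fun ε => if ε ∈ Ioo (0:ℝ) 1 then δ0 ε else 0) ε = δ0 ε := if_pos hε
    rw [hδval]
    have hup : ∀ (ν : Measure X),
        (∫ x in {x | η (f^[i] x) ≤ ε}, Real.log (η (f^[j] x)) ∂ν) ≤ 0 := fun ν =>
      setIntegral_nonpos hA fun x _ =>
        Real.log_nonpos (hη01 _).1 (hη01 _).2
    -- the continuous map g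
    have hgcont : Continuous fun x => Real.log (max (η x) (t ε)) := by
      refine Real.continuousOn_log.comp_continuous (hηc.max continuous_const) fun x => ?_
      exact ne_of_gt (lt_of_lt_of_le (htmem ε hε).1 (le_max_right _ _))
    set Gc : C(X, ℝ) := ⟨fun x => Real.log (max (η x) (t ε)), hgcont⟩ with hGc
    -- algebraic identity
    have halg : ∀ C : ℝ, Real.log (t ε) * (C / (-Real.log ε)) = -(C / s ε) := by
      intro C
      rw [hlogt ε, ← hssq ε hε]
      have hs := (hspos ε hε).ne'
      field_simp
    constructor
    · -- part (a)
      have ev1 : ∀ᶠ n in atTop, L - ε / 2 < ∫ x, Real.log (η x) ∂(μseq n) :=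
        hlim.eventually (eventually_gt_nhds (by linarith [hε.1]))
      have ev2 : ∀ᶠ n in atTop,
          (∫ x, Real.log (max (η x) (t ε)) ∂(μseq n)) < (∫ x, Real.log (max (η x) (t ε)) ∂μ) + ε / 2 := by
        have := (hweak Gc).eventually (eventually_lt_nhds
          (show (∫ x, Gc x ∂μ) < (∫ x, Real.log (max (η x) (t ε)) ∂μ) + ε / 2 by
            simp only [hGc, ContinuousMap.coe_mk]; linarith [hε.1]))
        simpa only [hGc, ContinuousMap.coe_mk] using this
      have ev3 : ∀ᶠ n in atTop, L - 1 < ∫ x, Real.log (η x) ∂(μseq n) :=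
        hlim.eventually (eventually_gt_nhds (by linarith))
      filter_upwards [ev1, ev2, ev3] with n h1 h2 h3
      refine ⟨hup _, ?_⟩
      haveI : IsProbabilityMeasure (μseq n) := (hμseq n).1
      have hcore := aux_core hf hηm hη01 (hμseq n).2.2 (hzero n) (hint n) i j hε (htmem ε hε)
      have hCn : (∫ x, -Real.log (η x) ∂(μseq n)) = -(∫ x, Real.log (η x) ∂(μseq n)) := by
        rw [integral_neg]
      rw [hCn, halg] at hcore
      have hdiv : (-(∫ x, Real.log (η x) ∂(μseq n))) / s ε ≤ (1 - L) / s ε :=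
        (div_le_div_iff_of_pos_right (hspos ε hε)).mpr (by linarith)
      simp only [hδ0def]
      linarith
    · -- part (b)
      refine ⟨hup _, ?_⟩
      have hcore := aux_core hf hηm hη01 hμ.2.2 hzeroμ hintμ i j hε (htmem ε hε)
      have hCμ : (∫ x, -Real.log (η x) ∂μ) = -L := by rw [integral_neg]
      rw [hCμ, halg] at hcore
      have hdiv : (-L) / s ε ≤ (1 - L) / s ε :=
        (div_le_div_iff_of_pos_right (hspos ε hε)).mpr (by linarith)
      simp only [hδ0def]
      linarith [hε.1]
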